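/- For an analytic map f(x) = -x + Σ_{j≥2} a_j x^j with f(f(x)) = x + Σ_{j≥3} W_j x^j, one has W₅ = -6a₄a₂ + 4a₃² - 2a₅ - a₂²a₃ - a₃², up to the relation W₅ - (1/2)a₃·W₃ = -6a₂a₄ + 4a₃² - 2a₅. That is, the coefficient of x⁵ in f∘f satisfies W₅ = V₅ + (1/2)a₃V₃ with V₃ = -2a₂² - 2a₃ and V₅ = -6a₂a₄ + 4a₃² - 2a₅. -/

import Mathlib

open FormalMultilinearSeries

instance (n : ℕ) : DecidableEq (Composition n) := fun a b =>
  decidable_of_iff (a.blocks = b.blocks)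
    ⟨fun h => by cases a; cases b; simpa using h, fun h => by rw [h]⟩

def mkComp (n : ℕ) (l : List ℕ) (h1 : ∀ {i}, i ∈ l → 0 < i) (h2 : l.sum = n) :
    Composition n := ⟨l, @h1, h2⟩

lemma coeff_comp (q p : FormalMultilinearSeries ℝ ℝ ℝ) (n : ℕ) :
    (q.comp p).coeff n
      = ∑ c : Composition n, (∏ i, p.coeff (c.blocksFun i)) * q.coeff (c.length) := by
  rw [FormalMultilinearSeries.coeff, FormalMultilinearSeries.comp,
    ContinuousMultilinearMap.sum_apply]
  refine Finset.sum_congr rfl fun c _ => ?_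
  rw [compAlongComposition_apply, apply_eq_prod_smul_coeff, smul_eq_mul]
  rfl

lemma univ_comp5 : (Finset.univ : Finset (Composition 5)) =
    {mkComp 5 [1,1,1,1,1] (by decide) (by decide),
     mkComp 5 [1,1,1,2] (by decide) (by decide),
     mkComp 5 [1,1,2,1] (by decide) (by decide),
     mkComp 5 [1,2,1,1] (by decide) (by decide),
     mkComp 5 [2,1,1,1] (by decide) (by decide),
     mkComp 5 [1,1,3] (by decide) (by decide),
     mkComp 5 [1,3,1] (by decide) (by decide),
     mkComp 5 [3,1,1] (by decide) (by decide),
     mkComp 5 [1,2,2] (by decide) (by decide),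
     mkComp 5 [2,1,2] (by decide) (by decide),
     mkComp 5 [2,2,1] (by decide) (by decide),
     mkComp 5 [1,4] (by decide) (by decide),
     mkComp 5 [4,1] (by decide) (by decide),
     mkComp 5 [2,3] (by decide) (by decide),
     mkComp 5 [3,2] (by decide) (by decide),
     mkComp 5 [5] (by decide) (by decide)} := by
  symm; apply Finset.eq_univ_of_card; rw [composition_card]; decide

lemma prod_blocks (p : FormalMultilinearSeries ℝ ℝ ℝ) {n : ℕ} (c : Composition n) :
    ∏ i, p.coeff (c.blocksFun i) = (c.blocks.map p.coeff).prod := by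
  rw [← List.prod_ofFn, ← Composition.ofFn_blocksFun, List.map_ofFn]
  rfl

lemma coeff_comp5 (p : FormalMultilinearSeries ℝ ℝ ℝ) :
    (p.comp p).coeff 5 =
      (p.coeff 1)^5 * p.coeff 5
      + 4 * (p.coeff 1)^3 * p.coeff 2 * p.coeff 4
      + 3 * (p.coeff 1)^2 * p.coeff 3 * p.coeff 3
      + 3 * p.coeff 1 * (p.coeff 2)^2 * p.coeff 3
      + 2 * p.coeff 1 * p.coeff 4 * p.coeff 2
      + 2 * p.coeff 2 * p.coeff 3 * p.coeff 2
      + p.coeff 5 * p.coeff 1 := by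
  rw [coeff_comp, univ_comp5]
  rw [Finset.sum_insert (by decide), Finset.sum_insert (by decide),
    Finset.sum_insert (by decide), Finset.sum_insert (by decide),
    Finset.sum_insert (by decide), Finset.sum_insert (by decide),
    Finset.sum_insert (by decide), Finset.sum_insert (by decide),
    Finset.sum_insert (by decide), Finset.sum_insert (by decide),
    Finset.sum_insert (by decide), Finset.sum_insert (by decide),
    Finset.sum_insert (by decide), Finset.sum_insert (by decide),
    Finset.sum_insert (by decide), Finset.sum_singleton]
  simp only [prod_blocks]
  simp only [mkComp, Composition.blocksFun, Composition.length, List.length_cons,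
    List.length_nil, Fin.prod_univ_succ, Fin.prod_univ_zero, List.get, Fin.succ, Fin.val_zero]
  norm_num
  ring

theorem stmt15 (f : ℝ → ℝ) (a2 a3 a4 a5 : ℝ) (hf : AnalyticAt ℝ f 0)
    (h0 : f 0 = 0) (h1 : deriv f 0 = -1)
    (h2 : iteratedDeriv 2 f 0 / 2 = a2) (h3 : iteratedDeriv 3 f 0 / 6 = a3)
    (h4 : iteratedDeriv 4 f 0 / 24 = a4) (h5 : iteratedDeriv 5 f 0 / 120 = a5) :
    iteratedDeriv 5 (f ∘ f) 0 / 120 =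
      (-6 * a2 * a4 + 4 * a3 ^ 2 - 2 * a5) + (1 / 2) * a3 * (-2 * a2 ^ 2 - 2 * a3) := by
  obtain ⟨p, hp⟩ := hf
  have hcomp : HasFPowerSeriesAt (f ∘ f) (p.comp p) 0 := by
    refine HasFPowerSeriesAt.comp ?_ hp
    rwa [h0]
  have key : ∀ (g : ℝ → ℝ) (q : FormalMultilinearSeries ℝ ℝ ℝ),
      HasFPowerSeriesAt g q 0 → ∀ k : ℕ, (Nat.factorial k : ℝ) * q.coeff k = iteratedDeriv k g 0 := by
    intro g q hq k
    obtain ⟨r, hr⟩ := hq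
    have := hr.factorial_smul (1 : ℝ) k
    rw [iteratedDeriv_eq_iteratedFDeriv, ← this, nsmul_eq_mul]
    rfl
  have c1 : p.coeff 1 = -1 := by
    have := key f p hp 1
    simp only [Nat.factorial_one, Nat.cast_one, one_mul, iteratedDeriv_one] at this
    rw [this, h1]
  have c2 : p.coeff 2 = a2 := by
    have := key f p hp 2
    rw [← h2, ← this]; norm_num
  have c3 : p.coeff 3 = a3 := by
    have := key f p hp 3
    rw [← h3, ← this]; norm_num [Nat.factorial]
  have c4 : p.coeff 4 = a4 := by
    have := key f p hp 4
    rw [← h4, ← this]; norm_num [Nat.factorial]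
  have c5 : p.coeff 5 = a5 := by
    have := key f p hp 5
    rw [← h5, ← this]; norm_num [Nat.factorial]
  have k5 := key (f ∘ f) (p.comp p) hcomp 5
  rw [← k5]
  rw [coeff_comp5, c1, c2, c3, c4, c5]
  norm_num [Nat.factorial]
  ring
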